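/- arXiv:2511.16008 — 3 statements merged into one kernel-verified Lean document; each statement's English description precedes it below -/
import Mathlib

section
/- Suppose the finite data (x1,x0,u0) of length N satisfy the finite data-generation assumption for the true system (A_s,B_s) ∈ A(X)×L(U,X). Fix γ ∈ (γ₋,1). Then the following are equivalent. (i) The finite data (x1,x0,u0) are informative for stabilization on X₊ with some decay rate γ' ∈ [γ₋,γ). (ii) Ran Ξ₀₊ = X₊, and there exists a right inverse Ξ₀₊† ∈ L(X₊, ℂ^N) of Ξ₀₊ (Ξ₀₊ Ξ₀₊† = I on X₊) such that Ξ₁₊ Ξ₀₊† is power stable with some decay rate γ' ∈ [γ₋,γ). -/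
noncomputable section
open ContinuousLinearMap
open scoped ENNReal

set_option maxHeartbeats 2000000


lemma aux_nat_le_pow {c : ℝ} (hc : 1 < c) (k : ℕ) : (k : ℝ) ≤ c ^ k / (c - 1) := by
  have h := one_add_mul_le_pow (a := c - 1) (by linarith) k
  rw [show (1 : ℝ) + (c - 1) = c by ring] at h
  rw [le_div_iff₀ (by linarith)]
  nlinarith [h]

lemma aux_k_pow {a b : ℝ} (ha : 0 < a) (hab : a < b) (k : ℕ) :
    (k : ℝ) * a ^ (k - 1) ≤ b ^ k / (b - a) := by
  cases k with
  | zero =>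
    simp only [Nat.cast_zero, zero_mul, pow_zero]
    exact div_nonneg zero_le_one (by linarith)
  | succ k =>
    have hb : 0 < b := ha.trans hab
    have hba : 0 < b / a - 1 := by rw [lt_sub_iff_add_lt, zero_add, lt_div_iff₀ ha]; linarith
    have h1 : ((k + 1 : ℕ) : ℝ) ≤ (b / a) ^ (k + 1) / (b / a - 1) :=
      aux_nat_le_pow (by rw [lt_div_iff₀ ha]; linarith) (k + 1)
    have h1' := (le_div_iff₀ hba).1 h1
    have h2 := mul_le_mul_of_nonneg_right h1' (le_of_lt (pow_pos ha (k + 1)))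
    have hpow : (b / a) ^ (k + 1) * a ^ (k + 1) = b ^ (k + 1) := by
      rw [div_pow, div_mul_cancel₀]
      exact pow_ne_zero _ (ne_of_gt ha)
    rw [le_div_iff₀ (by linarith : (0:ℝ) < b - a)]
    have key : ((k + 1 : ℕ) : ℝ) * a ^ (k + 1 - 1) * (b - a)
        = ((k + 1 : ℕ) : ℝ) * (b / a - 1) * a ^ (k + 1) := by
      field_simp
      rw [show k + 1 - 1 = k by omega]
      ring
    rw [key]
    linarith [hpow ▸ h2]

lemma aux_gelfand {V : Type*} [NormedAddCommGroup V] [NormedSpace ℂ V] [CompleteSpace V]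
    (T : V →L[ℂ] V) {r ρ : ℝ} (hρ0 : 0 < ρ)
    (hr : spectralRadius ℂ T ≤ ENNReal.ofReal r) (hrρ : r < ρ) :
    ∃ M : ℝ, 1 ≤ M ∧ ∀ k : ℕ, ‖T ^ k‖ ≤ M * ρ ^ k := by
  have htt := spectrum.pow_norm_pow_one_div_tendsto_nhds_spectralRadius T
  have hlt : spectralRadius ℂ T < ENNReal.ofReal ρ :=
    lt_of_le_of_lt hr ((ENNReal.ofReal_lt_ofReal_iff hρ0).2 hrρ)
  have hev := htt.eventually_lt_const hlt
  rw [Filter.eventually_atTop] at hev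
  obtain ⟨n0, hn0⟩ := hev
  have hbig : ∀ n : ℕ, n0 ≤ n → 1 ≤ n → ‖T ^ n‖ ≤ ρ ^ n := by
    intro n hn hn1
    have h1 := hn0 n hn
    rw [ENNReal.ofReal_lt_ofReal_iff hρ0] at h1
    have h3 : (‖T ^ n‖ ^ (1 / (n : ℝ))) ^ n ≤ ρ ^ n :=
      pow_le_pow_left₀ (Real.rpow_nonneg (norm_nonneg _) _) h1.le n
    rwa [one_div, Real.rpow_inv_natCast_pow (norm_nonneg _) (by omega)] at h3
  refine ⟨1 + ∑ n ∈ Finset.range (n0 + 1), ‖T ^ n‖ / ρ ^ n,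
    le_add_of_nonneg_right (Finset.sum_nonneg fun i _ =>
      div_nonneg (norm_nonneg _) (pow_nonneg hρ0.le _)), ?_⟩
  intro k
  have hρk : (0:ℝ) < ρ ^ k := pow_pos hρ0 k
  have hsum0 : (0:ℝ) ≤ ∑ n ∈ Finset.range (n0 + 1), ‖T ^ n‖ / ρ ^ n :=
    Finset.sum_nonneg fun i _ => div_nonneg (norm_nonneg _) (pow_nonneg hρ0.le _)
  by_cases hk : k ≤ n0
  · have hmem : k ∈ Finset.range (n0 + 1) := Finset.mem_range.2 (by omega)
    have h4 : ‖T ^ k‖ / ρ ^ k ≤ ∑ n ∈ Finset.range (n0 + 1), ‖T ^ n‖ / ρ ^ n :=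
      Finset.single_le_sum (f := fun n => ‖T ^ n‖ / ρ ^ n)
        (fun i _ => div_nonneg (norm_nonneg _) (pow_nonneg hρ0.le _)) hmem
    rw [div_le_iff₀ hρk] at h4
    nlinarith [h4, hρk]
  · have := hbig k (by omega) (by omega)
    nlinarith [this, hρk, hsum0]


lemma aux_trace_smulRight {V : Type} [NormedAddCommGroup V] [NormedSpace ℂ V]
    [FiniteDimensional ℂ V] (f : V →L[ℂ] ℂ) (v : V) :
    LinearMap.trace ℂ V ((f.smulRight v : V →L[ℂ] V) : V →ₗ[ℂ] V) = f v := by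
  have h : ((f.smulRight v : V →L[ℂ] V) : V →ₗ[ℂ] V)
      = dualTensorHom ℂ V V ((f : V →ₗ[ℂ] ℂ) ⊗ₜ v) := by
    ext x
    simp
  rw [h, LinearMap.trace_eq_contract_apply, contractLeft_apply]
  rfl

lemma aux_eig_bound {V : Type} [NormedAddCommGroup V] [NormedSpace ℂ V]
    [FiniteDimensional ℂ V] (G : V →L[ℂ] V) {M γ' : ℝ} (hγ : 0 < γ')
    (h : ∀ k : ℕ, ‖G ^ k‖ ≤ M * γ' ^ k) {μ : ℂ} {v : V} (hv : v ≠ 0)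
    (heig : G v = μ • v) : ‖μ‖ ≤ γ' := by
  have hpow : ∀ k : ℕ, (G ^ k) v = μ ^ k • v := by
    intro k
    induction k with
    | zero => simp
    | succ k ih =>
      rw [pow_succ', ContinuousLinearMap.mul_apply, ih, map_smul, heig, smul_smul, ← pow_succ]
  have hnv : 0 < ‖v‖ := norm_pos_iff.2 hv
  have hbd : ∀ k : ℕ, ‖μ‖ ^ k ≤ M * γ' ^ k := by
    intro k
    have h1 : ‖(G ^ k) v‖ ≤ M * γ' ^ k * ‖v‖ :=
      ((G ^ k).le_opNorm v).trans (by nlinarith [h k, hnv])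
    rw [hpow k, norm_smul, norm_pow] at h1
    exact le_of_mul_le_mul_right h1 hnv
  by_contra hgt
  push_neg at hgt
  have hc : 1 < ‖μ‖ / γ' := by rw [lt_div_iff₀ hγ]; linarith
  have htend := tendsto_pow_atTop_atTop_of_one_lt hc
  obtain ⟨k, hk⟩ := (htend.eventually_gt_atTop M).exists
  have h2 := hbd k
  rw [div_pow] at hk
  rw [lt_div_iff₀ (pow_pos hγ k)] at hk
  linarith

lemma aux_trace_bound {V : Type} [NormedAddCommGroup V] [NormedSpace ℂ V]
    [FiniteDimensional ℂ V] (G : V →L[ℂ] V) {M γ' : ℝ} (hγ : 0 < γ')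
    (h : ∀ k : ℕ, ‖G ^ k‖ ≤ M * γ' ^ k) :
    ‖LinearMap.trace ℂ V ((G : V →ₗ[ℂ] V))‖ ≤ (Module.finrank ℂ V) * γ' := by
  classical
  set g : V →ₗ[ℂ] V := (G : V →ₗ[ℂ] V) with hg
  set b := Module.finBasis ℂ V
  set Mx := LinearMap.toMatrix b b g with hMx
  have htr : LinearMap.trace ℂ V g = Mx.trace := by
    rw [LinearMap.trace_eq_matrix_trace ℂ b g]
  have hroots : Mx.trace = Mx.charpoly.roots.sum := Matrix.trace_eq_sum_roots_charpoly Mx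
  -- each root is bounded by γ'
  have hbound : ∀ μ ∈ Mx.charpoly.roots, ‖μ‖ ≤ γ' := by
    intro μ hμ
    have hroot : Mx.charpoly.IsRoot μ := (Polynomial.mem_roots'.1 hμ).2
    -- det (μ • 1 - Mx) = 0
    have hdet : (Matrix.diagonal (fun _ => μ) - Mx).det = 0 := by
      have h1 : ((Matrix.charmatrix Mx).map (Polynomial.evalRingHom μ)).det
          = Polynomial.eval μ Mx.charpoly := by
        rw [Matrix.charpoly, ← RingHom.mapMatrix_apply, ← RingHom.map_det]
        simp
      have h2 : (Matrix.charmatrix Mx).map (Polynomial.evalRingHom μ)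
          = Matrix.diagonal (fun _ => μ) - Mx := by
        ext i j
        by_cases hij : i = j
        · subst hij
          simp [Matrix.charmatrix_apply_eq, Matrix.diagonal]
        · simp [Matrix.charmatrix_apply_ne _ _ _ hij, Matrix.diagonal, hij, Matrix.sub_apply]
      rw [h2] at h1
      rw [h1]
      exact hroot
    -- transfer to linear map determinant
    have hdet2 : LinearMap.det (μ • (LinearMap.id : V →ₗ[ℂ] V) - g) = 0 := by
      rw [← LinearMap.det_toMatrix b]
      have : LinearMap.toMatrix b b (μ • (LinearMap.id : V →ₗ[ℂ] V) - g)
          = Matrix.diagonal (fun _ => μ) - Mx := by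
        rw [map_sub, map_smul, LinearMap.toMatrix_id]
        congr 1
        ext i j
        by_cases hij : i = j
        · subst hij; simp [Matrix.diagonal]
        · simp [Matrix.diagonal, hij, Matrix.one_apply]
      rw [this, hdet]
    have hker := LinearMap.bot_lt_ker_of_det_eq_zero hdet2
    obtain ⟨v, hvmem, hv0⟩ := (Submodule.ne_bot_iff _).1 (ne_of_gt hker)
    have heig : G v = μ • v := by
      have := LinearMap.mem_ker.1 hvmem
      have h3 : μ • v - g v = 0 := by simpa using this
      have h4 : g v = μ • v := by linear_combination (norm := module) -h3
      exact h4
    exact aux_eig_bound G hγ h hv0 heig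
  -- sum up
  rw [hg] at htr ⊢
  rw [htr, hroots]
  have hcard : (Mx.charpoly.roots.card : ℝ) ≤ (Module.finrank ℂ V : ℝ) := by
    have h1 : Mx.charpoly.roots.card ≤ Mx.charpoly.natDegree := Polynomial.card_roots' _
    have h2 : Mx.charpoly.natDegree = Module.finrank ℂ V := by
      rw [Matrix.charpoly_natDegree_eq_dim]
      simp
    rw [h2] at h1
    exact_mod_cast h1
  calc ‖Mx.charpoly.roots.sum‖ ≤ (Multiset.map (fun μ => ‖μ‖) Mx.charpoly.roots).sum :=
      norm_multiset_sum_le _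
  _ ≤ (Multiset.map (fun μ => ‖μ‖) Mx.charpoly.roots).card • γ' := by
      apply Multiset.sum_le_card_nsmul
      intro x hx
      obtain ⟨μ, hμ, rfl⟩ := Multiset.mem_map.1 hx
      exact hbound μ hμ
  _ ≤ (Module.finrank ℂ V : ℝ) * γ' := by
      rw [Multiset.card_map, nsmul_eq_mul]
      exact mul_le_mul_of_nonneg_right hcard hγ.le


/-- `A ∈ 𝒜(X)`: `A` leaves `Xm` invariant and the spectral radius of the
restriction `A|_{Xm}` is at most `γm`. -/
def MemAX {X : Type} [NormedAddCommGroup X] [InnerProductSpace ℂ X]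
    (Xm : Submodule ℂ X) (γm : ℝ) (A : X →L[ℂ] X) : Prop :=
  ∃ Am : Xm →L[ℂ] Xm, (∀ x : Xm, (Am x : X) = A (x : X)) ∧
    spectralRadius ℂ Am ≤ ENNReal.ofReal γm

theorem stmt_13
    {X : Type} [NormedAddCommGroup X] [InnerProductSpace ℂ X] [CompleteSpace X] [Nontrivial X]
    {U : Type} [NormedAddCommGroup U] [InnerProductSpace ℂ U] [CompleteSpace U] [Nontrivial U]
    (Xp Xm : Submodule ℂ X) (hXp : IsClosed (Xp : Set X)) (hXm : IsClosed (Xm : Set X))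
    (hinf : Xp ⊓ Xm = ⊥) (hsup : Xp ⊔ Xm = ⊤) [FiniteDimensional ℂ Xp]
    (γm : ℝ) (hγm0 : 0 < γm) (hγm1 : γm < 1)
    -- Π̃ : the projection onto X₊ along X₋, with codomain X₊
    (Pt : X →L[ℂ] Xp) (hPp : ∀ x ∈ Xp, (Pt x : X) = x) (hPm : ∀ x ∈ Xm, Pt x = 0)
    (N : ℕ) (x1 x0 : Fin N → X) (u0 : Fin N → U)
    (As : X →L[ℂ] X) (Bs : U →L[ℂ] X) (hAs : MemAX Xm γm As)
    (hgen : ∀ k : Fin N, x1 k = As (x0 k) + Bs (u0 k))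
    -- the synthesis operators Ξ₁₊ = Π̃Ξ₁ and Ξ₀₊ = Π̃Ξ₀
    (Ξ1p Ξ0p : (Fin N → ℂ) →L[ℂ] Xp)
    (hΞ1p : ∀ w : Fin N → ℂ, Ξ1p w = ∑ k : Fin N, w k • Pt (x1 k))
    (hΞ0p : ∀ w : Fin N → ℂ, Ξ0p w = ∑ k : Fin N, w k • Pt (x0 k))
    (γ : ℝ) (hγl : γm < γ) (hγu : γ < 1) :
    -- (i) informativity for stabilization on X₊ with some decay rate γ' ∈ [γ₋, γ)
    (∃ γ' : ℝ, γm ≤ γ' ∧ γ' < γ ∧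
      ∃ K : X →L[ℂ] U, (∀ x ∈ Xm, K x = 0) ∧
        ∀ (A : X →L[ℂ] X) (B : U →L[ℂ] X),
          MemAX Xm γm A → (∀ k : Fin N, x1 k = A (x0 k) + B (u0 k)) →
          ∃ M : ℝ, 1 ≤ M ∧ ∀ k : ℕ, ‖(A + B.comp K) ^ k‖ ≤ M * γ' ^ k)
    ↔
    -- (ii)
    (Function.Surjective ⇑Ξ0p ∧
      ∃ Ξd : Xp →L[ℂ] (Fin N → ℂ), Ξ0p ∘L Ξd = ContinuousLinearMap.id ℂ Xp ∧
        ∃ γ' : ℝ, γm ≤ γ' ∧ γ' < γ ∧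
          ∃ M : ℝ, 1 ≤ M ∧ ∀ k : ℕ, ‖(Ξ1p ∘L Ξd) ^ k‖ ≤ M * γ' ^ k) := by
    classical
  haveI : CompleteSpace Xm := hXm.completeSpace_coe
  set ι : Xp →L[ℂ] X := Xp.subtypeL with hιdef
  have hιnorm : ∀ p : Xp, ‖ι p‖ = ‖p‖ := fun p => rfl
  have hPtι : ∀ p : Xp, Pt (ι p) = p := by
    intro p
    exact Subtype.ext (hPp (p : X) p.2)
  have hker : ∀ y : X, Pt y = 0 → y ∈ Xm := by
    intro y hy
    have hy' : y ∈ Xp ⊔ Xm := hsup ▸ Submodule.mem_top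
    rcases Submodule.mem_sup.1 hy' with ⟨a, ha, b, hb, hab⟩
    have h1 : Pt y = Pt a + Pt b := by rw [← hab, map_add]
    rw [hPm b hb, add_zero, hy] at h1
    have h2 : a = (0 : X) := by
      have := hPp a ha
      rw [← h1] at this
      simpa using this.symm
    rw [← hab, h2, zero_add]
    exact hb
  have hqmem : ∀ x : X, x - ι (Pt x) ∈ Xm := by
    intro x
    apply hker
    rw [map_sub, hPtι, sub_self]
  -- the continuous synthesis operator for inputs
  set Υ0 : (Fin N → ℂ) →L[ℂ] U :=
    ∑ k : Fin N, (ContinuousLinearMap.proj (R := ℂ) (φ := fun _ : Fin N => ℂ) k).smulRight (u0 k)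
    with hΥ0def
  have hΥ0 : ∀ w : Fin N → ℂ, Υ0 w = ∑ k : Fin N, w k • u0 k := by
    intro w
    rw [hΥ0def, ContinuousLinearMap.sum_apply]
    simp
  have hΥ0e : ∀ k : Fin N, Υ0 (Pi.single k 1) = u0 k := by
    intro k
    rw [hΥ0 _]
    simp [Pi.single_apply]
  have hΞ0e : ∀ k : Fin N, Ξ0p (Pi.single k 1) = Pt (x0 k) := by
    intro k
    rw [hΞ0p _]
    simp [Pi.single_apply]
  -- the key formula for Ξ1p in terms of a consistent system
  have star : ∀ (A : X →L[ℂ] X) (B : U →L[ℂ] X), (∀ y ∈ Xm, A y ∈ Xm) →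
      (∀ k : Fin N, x1 k = A (x0 k) + B (u0 k)) →
      ∀ w : Fin N → ℂ, Ξ1p w = Pt (A (ι (Ξ0p w))) + Pt (B (Υ0 w)) := by
    intro A B hAinv hcons w
    set s0 : X := ∑ k : Fin N, w k • x0 k with hs0
    have hPts0 : Pt s0 = Ξ0p w := by
      rw [hs0, map_sum, hΞ0p]
      simp
    have h1 : Ξ1p w = Pt (A s0 + B (Υ0 w)) := by
      have hsum : A s0 + B (Υ0 w) = ∑ k : Fin N, w k • x1 k := by
        rw [hs0, hΥ0, map_sum, map_sum, ← Finset.sum_add_distrib]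
        apply Finset.sum_congr rfl
        intro k _
        rw [hcons k, map_smul, map_smul, smul_add]
      rw [hΞ1p, hsum, map_sum]
      simp
    have h2 : s0 - ι (Ξ0p w) ∈ Xm := by
      have := hqmem s0
      rwa [hPts0] at this
    have h3 : Pt (A (s0 - ι (Ξ0p w))) = 0 := hPm _ (hAinv _ h2)
    rw [h1, map_add]
    congr 1
    have h4 : A s0 = A (ι (Ξ0p w)) + A (s0 - ι (Ξ0p w)) := by
      rw [← map_add]
      congr 1
      abel
    rw [h4, map_add, h3, add_zero]
  -- block power formula
  have block : ∀ S : X →L[ℂ] X, (∀ y ∈ Xm, S y ∈ Xm) → ∀ (k : ℕ) (x : X),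
      Pt ((S ^ k) x) = ((Pt ∘L (S ∘L ι)) ^ k) (Pt x) := by
    intro S hSm
    have hcomm : ∀ x : X, Pt (S x) = (Pt ∘L (S ∘L ι)) (Pt x) := by
      intro x
      have h1 : S x = S (ι (Pt x)) + S (x - ι (Pt x)) := by
        rw [← map_add]
        congr 1
        abel
      rw [h1, map_add, hPm _ (hSm _ (hqmem x)), add_zero]
      rfl
    intro k
    induction k with
    | zero => intro x; simp
    | succ k ih =>
      intro x
      rw [pow_succ', pow_succ', ContinuousLinearMap.mul_apply, ContinuousLinearMap.mul_apply,
        hcomm ((S ^ k) x), ih x]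
  constructor
  · rintro ⟨γ', hγ'l, hγ'u, K, hK0, hstab⟩
    have hγ'0 : 0 < γ' := lt_of_lt_of_le hγm0 hγ'l
    obtain ⟨Am, hAmc, hAmr⟩ := hAs
    have hAsinv : ∀ y ∈ Xm, As y ∈ Xm := by
      intro y hy
      rw [← hAmc ⟨y, hy⟩]
      exact ((Am ⟨y, hy⟩) : Xm).2
    -- uniform power bound for the upper block of a stabilized closed loop
    have powbd : ∀ (S : X →L[ℂ] X), (∀ y ∈ Xm, S y ∈ Xm) → ∀ (Mt : ℝ),
        (∀ k : ℕ, ‖S ^ k‖ ≤ Mt * γ' ^ k) →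
        ∀ k : ℕ, ‖(Pt ∘L (S ∘L ι)) ^ k‖ ≤ (‖Pt‖ * Mt) * γ' ^ k := by
      intro S hSm Mt hMt k
      have hMt0 : 0 ≤ Mt := by
        have h0 := hMt 0
        have h1 : (0:ℝ) ≤ ‖S ^ 0‖ := norm_nonneg _
        simpa using le_trans h1 h0
      apply ContinuousLinearMap.opNorm_le_bound
      · have hg : (0:ℝ) ≤ γ' ^ k := by positivity
        have h2 : (0:ℝ) ≤ ‖Pt‖ := Pt.opNorm_nonneg
        have h3 : (0:ℝ) ≤ ‖Pt‖ * Mt := mul_nonneg h2 hMt0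
        exact mul_nonneg h3 hg
      · intro p
        have h1 := block S hSm k (ι p)
        rw [hPtι p] at h1
        calc ‖((Pt ∘L (S ∘L ι)) ^ k) p‖ = ‖Pt ((S ^ k) (ι p))‖ := by rw [h1]
        _ ≤ ‖Pt‖ * ‖(S ^ k) (ι p)‖ := Pt.le_opNorm _
        _ ≤ ‖Pt‖ * (Mt * γ' ^ k * ‖ι p‖) := by
            apply mul_le_mul_of_nonneg_left _ Pt.opNorm_nonneg
            calc ‖(S ^ k) (ι p)‖ ≤ ‖S ^ k‖ * ‖ι p‖ := (S ^ k).le_opNorm _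
            _ ≤ Mt * γ' ^ k * ‖ι p‖ := mul_le_mul_of_nonneg_right (hMt k) (norm_nonneg _)
        _ = (‖Pt‖ * Mt) * γ' ^ k * ‖p‖ := by rw [hιnorm]; ring
    -- the key trace vanishing lemma for admissible perturbations
    set F0 : Xp →L[ℂ] Xp := Pt ∘L ((As + Bs.comp K) ∘L ι) with hF0def
    have key : ∀ (C : Xp →L[ℂ] Xp) (Θ : U →L[ℂ] Xp),
        (∀ k : Fin N, C (Pt (x0 k)) + Θ (u0 k) = 0) →
        LinearMap.trace ℂ Xp ((C + Θ ∘L (K ∘L ι) : Xp →L[ℂ] Xp) : Xp →ₗ[ℂ] Xp) = 0 := by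
      intro C Θ hadm
      set P : Xp →L[ℂ] Xp := C + Θ ∘L (K ∘L ι) with hPdef
      have hbound : ∀ t : ℕ,
          ‖LinearMap.trace ℂ Xp ((F0 : Xp →L[ℂ] Xp) : Xp →ₗ[ℂ] Xp)
            + (t : ℂ) * LinearMap.trace ℂ Xp ((P : Xp →L[ℂ] Xp) : Xp →ₗ[ℂ] Xp)‖
            ≤ (Module.finrank ℂ Xp : ℝ) * γ' := by
        intro t
        set At : X →L[ℂ] X := As + ι ∘L (((t : ℂ) • C) ∘L Pt) with hAtdef
        set Bt : U →L[ℂ] X := Bs + ι ∘L ((t : ℂ) • Θ) with hBtdef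
        have hmem : MemAX Xm γm At := by
          refine ⟨Am, ?_, hAmr⟩
          intro z
          have h0 : Pt (z : X) = 0 := hPm _ z.2
          rw [hAtdef]
          simp [h0, hAmc z]
        have hconsT : ∀ k : Fin N, x1 k = At (x0 k) + Bt (u0 k) := by
          intro k
          have hR : At (x0 k) + Bt (u0 k)
              = As (x0 k) + Bs (u0 k) + ι ((t : ℂ) • (C (Pt (x0 k)) + Θ (u0 k))) := by
            rw [hAtdef, hBtdef]
            simp only [ContinuousLinearMap.add_apply, ContinuousLinearMap.comp_apply,
              ContinuousLinearMap.smul_apply]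
            rw [smul_add, map_add]
            abel
          rw [hR, hadm k]
          simp [hgen k]
        obtain ⟨Mt, hMt1, hMt⟩ := hstab At Bt hmem hconsT
        set St : X →L[ℂ] X := At + Bt.comp K with hStdef
        have hStm : ∀ z ∈ Xm, St z ∈ Xm := by
          intro z hz
          have h1 : K z = 0 := hK0 z hz
          have h2 : Pt z = 0 := hPm z hz
          have h3 : St z = As z := by
            rw [hStdef, hAtdef, hBtdef]
            simp [h1, h2]
          rw [h3]
          exact hAsinv z hz
        have hFt := powbd St hStm Mt hMt
        have htr := aux_trace_bound (Pt ∘L (St ∘L ι)) hγ'0 hFt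
        have hFteq : Pt ∘L (St ∘L ι) = F0 + (t : ℂ) • P := by
          ext p
          rw [hStdef, hAtdef, hBtdef, hF0def, hPdef]
          simp only [ContinuousLinearMap.comp_apply, ContinuousLinearMap.add_apply,
            ContinuousLinearMap.smul_apply, ContinuousLinearMap.coe_smul', Pi.smul_apply,
            map_add, hPtι]
          rw [smul_add]
          abel
        rw [hFteq] at htr
        have hcoe : (((F0 + (t : ℂ) • P : Xp →L[ℂ] Xp)) : Xp →ₗ[ℂ] Xp)
            = ((F0 : Xp →L[ℂ] Xp) : Xp →ₗ[ℂ] Xp) + (t : ℂ) • ((P : Xp →L[ℂ] Xp) : Xp →ₗ[ℂ] Xp) := by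
          rfl
        rw [hcoe, map_add, map_smul, smul_eq_mul] at htr
        exact htr
      by_contra hP0
      have hτP : 0 < ‖LinearMap.trace ℂ Xp ((P : Xp →L[ℂ] Xp) : Xp →ₗ[ℂ] Xp)‖ :=
        norm_pos_iff.2 hP0
      set τF := LinearMap.trace ℂ Xp ((F0 : Xp →L[ℂ] Xp) : Xp →ₗ[ℂ] Xp) with hτFdef
      set τP := LinearMap.trace ℂ Xp ((P : Xp →L[ℂ] Xp) : Xp →ₗ[ℂ] Xp) with hτPdef
      obtain ⟨t, ht⟩ := exists_nat_gt (((Module.finrank ℂ Xp : ℝ) * γ' + ‖τF‖) / ‖τP‖)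
      have h1 := hbound t
      have h2 : (t : ℝ) * ‖τP‖ - ‖τF‖ ≤ ‖τF + (t : ℂ) * τP‖ := by
        have h3 : ‖(t : ℂ) * τP‖ ≤ ‖τF + (t : ℂ) * τP‖ + ‖τF‖ := by
          calc ‖(t : ℂ) * τP‖ = ‖(τF + (t : ℂ) * τP) - τF‖ := by congr 1; ring
          _ ≤ ‖τF + (t : ℂ) * τP‖ + ‖τF‖ := norm_sub_le _ _
        rw [norm_mul, Complex.norm_natCast] at h3
        linarith
      rw [div_lt_iff₀ hτP] at ht
      linarith
    -- surjectivity of Ξ0p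
    have hsurj : Function.Surjective ⇑Ξ0p := by
      by_contra hns
      have hne : LinearMap.range ((Ξ0p : (Fin N → ℂ) →L[ℂ] Xp) : (Fin N → ℂ) →ₗ[ℂ] Xp) ≠ ⊤ := by
        intro h
        apply hns
        have := LinearMap.range_eq_top.1 h
        simpa using this
      obtain ⟨ph, hph⟩ : ∃ p : Xp,
          p ∉ LinearMap.range ((Ξ0p : (Fin N → ℂ) →L[ℂ] Xp) : (Fin N → ℂ) →ₗ[ℂ] Xp) := by
        by_contra hall
        push_neg at hall
        exact hne (Submodule.eq_top_iff'.2 hall)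
      set W := LinearMap.range ((Ξ0p : (Fin N → ℂ) →L[ℂ] Xp) : (Fin N → ℂ) →ₗ[ℂ] Xp) with hWdef
      have hv0 : W.mkQ ph ≠ 0 := by
        rw [Submodule.mkQ_apply, Ne, Submodule.Quotient.mk_eq_zero]
        exact hph
      obtain ⟨f, hf⟩ : ∃ f : Module.Dual ℂ (Xp ⧸ W), f (W.mkQ ph) ≠ 0 := by
        by_contra hall
        push_neg at hall
        exact hv0 ((Module.forall_dual_apply_eq_zero_iff ℂ _).1 hall)
      set φ : Xp →ₗ[ℂ] ℂ := f ∘ₗ W.mkQ with hφdef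
      set C : Xp →L[ℂ] Xp := (LinearMap.toContinuousLinearMap φ).smulRight ph with hCdef
      have hadm : ∀ k : Fin N, C (Pt (x0 k)) + (0 : U →L[ℂ] Xp) (u0 k) = 0 := by
        intro k
        have hmem : Pt (x0 k) ∈ W := ⟨Pi.single k 1, hΞ0e k⟩
        have hφ0 : φ (Pt (x0 k)) = 0 := by
          rw [hφdef]
          simp only [LinearMap.comp_apply, Submodule.mkQ_apply]
          rw [(Submodule.Quotient.mk_eq_zero W).2 hmem, map_zero]
        rw [hCdef]
        simp [hφ0]
      have h0 := key C 0 hadm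
      have hz : (0 : U →L[ℂ] Xp) ∘L (K ∘L ι) = 0 := by
        ext q
        simp
      rw [hz, add_zero, hCdef, aux_trace_smulRight] at h0
      apply hf
      have : φ ph = f (W.mkQ ph) := rfl
      rw [← this]
      simpa using h0
    -- every pair (p, Pt (Bs (K (ι p)))) is generated by the data
    set T : (Fin N → ℂ) →L[ℂ] Xp := Pt ∘L (Bs ∘L Υ0) with hTdef
    set yb : Xp →L[ℂ] Xp := Pt ∘L (Bs ∘L (K ∘L ι)) with hybdef
    set L : (Fin N → ℂ) →ₗ[ℂ] Xp × Xp :=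
      LinearMap.prod ((Ξ0p : (Fin N → ℂ) →L[ℂ] Xp) : (Fin N → ℂ) →ₗ[ℂ] Xp)
        ((T : (Fin N → ℂ) →L[ℂ] Xp) : (Fin N → ℂ) →ₗ[ℂ] Xp) with hLdef
    have hmemW : ∀ p : Xp, (p, yb p) ∈ LinearMap.range L := by
      intro p
      by_contra hp
      set W2 := LinearMap.range L with hW2def
      have hv0 : W2.mkQ (p, yb p) ≠ 0 := by
        rw [Submodule.mkQ_apply, Ne, Submodule.Quotient.mk_eq_zero]
        exact hp
      obtain ⟨f, hf⟩ : ∃ f : Module.Dual ℂ ((Xp × Xp) ⧸ W2), f (W2.mkQ (p, yb p)) ≠ 0 := by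
        by_contra hall
        push_neg at hall
        exact hv0 ((Module.forall_dual_apply_eq_zero_iff ℂ _).1 hall)
      set φ : Xp × Xp →ₗ[ℂ] ℂ := f ∘ₗ W2.mkQ with hφdef
      set φ1 : Xp →ₗ[ℂ] ℂ := φ ∘ₗ LinearMap.inl ℂ Xp Xp with hφ1def
      set φ2 : Xp →ₗ[ℂ] ℂ := φ ∘ₗ LinearMap.inr ℂ Xp Xp with hφ2def
      have hφsplit : ∀ a b : Xp, φ (a, b) = φ1 a + φ2 b := by
        intro a b
        have hab : ((a, b) : Xp × Xp) = (a, 0) + (0, b) := by simp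
        rw [hφ1def, hφ2def]
        simp only [LinearMap.comp_apply, LinearMap.inl_apply, LinearMap.inr_apply]
        rw [hab, map_add]
      set C : Xp →L[ℂ] Xp := (LinearMap.toContinuousLinearMap φ1).smulRight p with hCdef
      set Θ : U →L[ℂ] Xp :=
        ((LinearMap.toContinuousLinearMap φ2) ∘L (Pt ∘L Bs)).smulRight p with hΘdef
      have hφW : ∀ w : Fin N → ℂ, φ (Ξ0p w, T w) = 0 := by
        intro w
        have hmem : ((Ξ0p w, T w) : Xp × Xp) ∈ W2 := ⟨w, rfl⟩
        rw [hφdef]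
        simp only [LinearMap.comp_apply, Submodule.mkQ_apply]
        rw [(Submodule.Quotient.mk_eq_zero W2).2 hmem, map_zero]
      have hadm : ∀ k : Fin N, C (Pt (x0 k)) + Θ (u0 k) = 0 := by
        intro k
        have hTk : T (Pi.single k 1) = Pt (Bs (u0 k)) := by
          rw [hTdef]
          simp only [ContinuousLinearMap.comp_apply]
          rw [hΥ0e k]
        have h1 : φ (Pt (x0 k), Pt (Bs (u0 k))) = 0 := by
          rw [← hΞ0e k, ← hTk]
          exact hφW (Pi.single k 1)
        rw [hφsplit] at h1
        rw [hCdef, hΘdef]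
        simp only [ContinuousLinearMap.smulRight_apply, ContinuousLinearMap.comp_apply,
          LinearMap.coe_toContinuousLinearMap']
        rw [← add_smul, h1, zero_smul]
      have h0 := key C Θ hadm
      have hcomb : (C + Θ ∘L (K ∘L ι) : Xp →L[ℂ] Xp)
          = ((LinearMap.toContinuousLinearMap φ1)
            + ((LinearMap.toContinuousLinearMap φ2) ∘L (Pt ∘L Bs)) ∘L (K ∘L ι)).smulRight p := by
        ext q
        rw [hCdef, hΘdef]
        simp only [ContinuousLinearMap.add_apply, ContinuousLinearMap.smulRight_apply,
          ContinuousLinearMap.comp_apply]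
        rw [add_smul]
      rw [hcomb, aux_trace_smulRight] at h0
      apply hf
      have h2 : φ (p, yb p) = f (W2.mkQ (p, yb p)) := rfl
      rw [← h2, hφsplit]
      have h3 : φ2 (yb p) = ((LinearMap.toContinuousLinearMap φ2) ∘L (Pt ∘L Bs)) ((K ∘L ι) p) := by
        rw [hybdef]
        simp
      rw [h3]
      simpa using h0
    -- construct the right inverse from the data
    set bXp := Module.finBasis ℂ Xp with hbXp
    have hch : ∀ i, ∃ w : Fin N → ℂ, L w = (bXp i, yb (bXp i)) := by
      intro i
      obtain ⟨w, hw⟩ := hmemW (bXp i)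
      exact ⟨w, hw⟩
    choose wsel hwsel using hch
    set Ξdl : Xp →ₗ[ℂ] (Fin N → ℂ) := bXp.constr ℂ wsel with hΞdl
    have hLd : ∀ p : Xp, L (Ξdl p) = (p, yb p) := by
      have heq : L ∘ₗ Ξdl
          = LinearMap.prod LinearMap.id ((yb : Xp →L[ℂ] Xp) : Xp →ₗ[ℂ] Xp) := by
        apply bXp.ext
        intro i
        rw [LinearMap.comp_apply, hΞdl, Module.Basis.constr_basis, hwsel i]
        simp
      intro p
      have h := LinearMap.congr_fun heq p
      simpa using h
    set Ξd : Xp →L[ℂ] (Fin N → ℂ) := LinearMap.toContinuousLinearMap Ξdl with hΞddef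
    have hΞdapp : ∀ p : Xp, Ξd p = Ξdl p := by
      intro p
      rw [hΞddef]
      rfl
    have hΞ0d : ∀ p : Xp, Ξ0p (Ξd p) = p := by
      intro p
      have h := congrArg Prod.fst (hLd p)
      rw [hΞdapp]
      exact h
    have hTd : ∀ p : Xp, T (Ξd p) = yb p := by
      intro p
      have h := congrArg Prod.snd (hLd p)
      rw [hΞdapp]
      exact h
    refine ⟨hsurj, Ξd, ?_, γ', hγ'l, hγ'u, ?_⟩
    · ext p
      simp [hΞ0d p]
    · obtain ⟨Ms, hMs1, hMs⟩ := hstab As Bs ⟨Am, hAmc, hAmr⟩ hgen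
      set S0 : X →L[ℂ] X := As + Bs.comp K with hS0def
      have hS0m : ∀ z ∈ Xm, S0 z ∈ Xm := by
        intro z hz
        have h1 : K z = 0 := hK0 z hz
        have h2 : S0 z = As z := by
          rw [hS0def]
          simp [h1]
        rw [h2]
        exact hAsinv z hz
      have hFeq : Ξ1p ∘L Ξd = Pt ∘L (S0 ∘L ι) := by
        refine ContinuousLinearMap.ext fun p => ?_
        have h1 := star As Bs hAsinv hgen (Ξd p)
        have h2 : T (Ξd p) = Pt (Bs (Υ0 (Ξd p))) := by
          rw [hTdef]
          rfl
        have h3 : yb p = Pt (Bs (K (ι p))) := by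
          rw [hybdef]
          rfl
        have h4 : Pt (Bs (Υ0 (Ξd p))) = Pt (Bs (K (ι p))) := by
          rw [← h2, ← h3]
          exact hTd p
        calc (Ξ1p ∘L Ξd) p = Ξ1p (Ξd p) := rfl
        _ = Pt (As (ι (Ξ0p (Ξd p)))) + Pt (Bs (Υ0 (Ξd p))) := h1
        _ = Pt (As (ι p)) + Pt (Bs (K (ι p))) := by rw [hΞ0d p, h4]
        _ = (Pt ∘L (S0 ∘L ι)) p := by
            rw [hS0def]
            simp
      refine ⟨max 1 (‖Pt‖ * Ms), le_max_left _ _, ?_⟩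
      intro k
      rw [hFeq]
      calc ‖(Pt ∘L (S0 ∘L ι)) ^ k‖ ≤ (‖Pt‖ * Ms) * γ' ^ k := powbd S0 hS0m Ms hMs k
      _ ≤ max 1 (‖Pt‖ * Ms) * γ' ^ k :=
          mul_le_mul_of_nonneg_right (le_max_right _ _) (by positivity)
  · rintro ⟨-, Ξd, hΞd, γ', hγ'l, hγ'u, M, hM1, hM⟩
    have hγ'0 : 0 < γ' := lt_of_lt_of_le hγm0 hγ'l
    set γ1 : ℝ := (γ' + γ) / 2 with hγ1def
    set γ2 : ℝ := (γ1 + γ) / 2 with hγ2def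
    have hγ'1 : γ' < γ1 := by rw [hγ1def]; linarith
    have hγ12 : γ1 < γ2 := by rw [hγ2def]; linarith
    have hγ2γ : γ2 < γ := by rw [hγ2def]; linarith
    have hγ10 : 0 < γ1 := by linarith
    have hγ20 : 0 < γ2 := by linarith
    have hγ'le1 : γ' ≤ 1 := by linarith
    refine ⟨γ2, by linarith, hγ2γ, ?_⟩
    set K : X →L[ℂ] U := Υ0 ∘L (Ξd ∘L Pt) with hKdef
    have hKm : ∀ y ∈ Xm, K y = 0 := by
      intro y hy
      rw [hKdef]
      simp [hPm y hy]
    refine ⟨K, hKm, ?_⟩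
    intro A B hA hcons
    obtain ⟨Am, hAmc, hAmr⟩ := hA
    obtain ⟨Mm, hMm1, hMm⟩ := aux_gelfand Am hγ10 hAmr (lt_of_le_of_lt hγ'l hγ'1)
    have hAinv : ∀ y ∈ Xm, A y ∈ Xm := by
      intro y hy
      rw [← hAmc ⟨y, hy⟩]
      exact ((Am ⟨y, hy⟩) : Xm).2
    set S : X →L[ℂ] X := A + B.comp K with hSdef
    have hSy : ∀ (y : X) (hy : y ∈ Xm), S y = ((Am ⟨y, hy⟩ : Xm) : X) := by
      intro y hy
      rw [hSdef]
      simp [hKm y hy, hAmc ⟨y, hy⟩]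
    have hSm : ∀ y ∈ Xm, S y ∈ Xm := by
      intro y hy
      rw [hSy y hy]
      exact ((Am ⟨y, hy⟩) : Xm).2
    set Fp : Xp →L[ℂ] Xp := Ξ1p ∘L Ξd with hFpdef
    have hΞ0d : ∀ p : Xp, Ξ0p (Ξd p) = p := by
      intro p
      have h := congrArg (fun f : Xp →L[ℂ] Xp => f p) hΞd
      simpa using h
    have hFb : (Pt ∘L (S ∘L ι)) = Fp := by
      ext p
      have h1 : Pt (S (ι p)) = Pt (A (ι p)) + Pt (B (K (ι p))) := by
        rw [hSdef]
        simp
      have h2 : Fp p = Pt (A (ι (Ξ0p (Ξd p)))) + Pt (B (Υ0 (Ξd p))) := by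
        rw [hFpdef]
        exact star A B hAinv hcons (Ξd p)
      have h3 : K (ι p) = Υ0 (Ξd p) := by
        rw [hKdef]
        simp [hPtι p]
      simp only [ContinuousLinearMap.comp_apply]
      rw [h1, h2, hΞ0d p, h3]
    have hpowc : ∀ (k : ℕ) (x : X), Pt ((S ^ k) x) = (Fp ^ k) (Pt x) := by
      intro k x
      rw [← hFb]
      exact block S hSm k x
    have hcomm1 : ∀ z : X, Pt (S z) = Fp (Pt z) := by
      intro z
      have h := hpowc 1 z
      simpa using h
    have hSpowXm : ∀ (j : ℕ) (y : X), ∀ hy : y ∈ Xm, ‖(S ^ j) y‖ ≤ Mm * γ1 ^ j * ‖y‖ := by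
      have hform : ∀ (j : ℕ) (y : X), ∀ hy : y ∈ Xm, (S ^ j) y = (((Am ^ j) ⟨y, hy⟩ : Xm) : X) := by
        intro j
        induction j with
        | zero => intro y hy; simp
        | succ j ih =>
          intro y hy
          have hmem : S y ∈ Xm := hSm y hy
          rw [pow_succ, ContinuousLinearMap.mul_apply, ih (S y) hmem]
          have : (⟨S y, hmem⟩ : Xm) = Am ⟨y, hy⟩ := Subtype.ext (hSy y hy)
          rw [pow_succ, ContinuousLinearMap.mul_apply]
          congr 2
      intro j y hy
      rw [hform j y hy]
      have h1 : ‖(((Am ^ j) ⟨y, hy⟩ : Xm) : X)‖ = ‖(Am ^ j) ⟨y, hy⟩‖ := rfl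
      have h2 : ‖(⟨y, hy⟩ : Xm)‖ = ‖y‖ := rfl
      rw [h1]
      calc ‖(Am ^ j) ⟨y, hy⟩‖ ≤ ‖Am ^ j‖ * ‖(⟨y, hy⟩ : Xm)‖ := (Am ^ j).le_opNorm _
      _ ≤ Mm * γ1 ^ j * ‖y‖ := by
          rw [h2]
          exact mul_le_mul_of_nonneg_right (hMm j) (norm_nonneg y)
    -- main estimate
    set cp : ℝ := ‖Pt‖ with hcpdef
    set cS : ℝ := ‖S‖ with hcSdef
    have hcp0 : 0 ≤ cp := by rw [hcpdef]; exact norm_nonneg Pt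
    have hcS0 : 0 ≤ cS := by rw [hcSdef]; exact norm_nonneg S
    have hM0 : 0 < M := lt_of_lt_of_le zero_lt_one hM1
    have hMm0 : 0 < Mm := lt_of_lt_of_le zero_lt_one hMm1
    set CC : ℝ := M * cp + Mm * (1 + cp) + Mm * ((cS + 1) * (M * cp)) / (γ2 - γ1) with hCCdef
    have est : ∀ (k : ℕ) (x : X), ‖(S ^ k) x‖ ≤ CC * γ2 ^ k * ‖x‖ := by
      intro k x
      set z : ℕ → Xp := fun j => (Fp ^ j) (Pt x) with hzdef
      have hznorm : ∀ j, ‖z j‖ ≤ M * γ' ^ j * (cp * ‖x‖) := by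
        intro j
        calc ‖z j‖ ≤ ‖Fp ^ j‖ * ‖Pt x‖ := (Fp ^ j).le_opNorm _
        _ ≤ (M * γ' ^ j) * (cp * ‖x‖) := by
            apply mul_le_mul (hM j) (Pt.le_opNorm x) (norm_nonneg _)
            positivity
      set q : ℕ → X := fun j => (S ^ j) x - ι (z j) with hqdef
      set v : ℕ → X := fun j => S (ι (z j)) - ι (z (j + 1)) with hvdef
      have hqX : ∀ j, (S ^ j) x = ι (z j) + q j := by
        intro j
        have : q j = (S ^ j) x - ι (z j) := rfl
        rw [this]
        abel
      have hzsucc : ∀ j, z (j + 1) = Fp (z j) := by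
        intro j
        show (Fp ^ (j + 1)) (Pt x) = Fp ((Fp ^ j) (Pt x))
        rw [pow_succ', ContinuousLinearMap.mul_apply]
      have hvXm : ∀ j, v j ∈ Xm := by
        intro j
        apply hker
        have hv1 : v j = S (ι (z j)) - ι (z (j + 1)) := rfl
        rw [hv1, map_sub, hcomm1 (ι (z j)), hPtι, hPtι, hzsucc j, sub_self]
      have hrec : ∀ j, q (j + 1) = v j + S (q j) := by
        intro j
        have hq1 : q (j + 1) = (S ^ (j + 1)) x - ι (z (j + 1)) := rfl
        have hv1 : v j = S (ι (z j)) - ι (z (j + 1)) := rfl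
        have h1 : (S ^ (j + 1)) x = S ((S ^ j) x) := by
          rw [pow_succ', ContinuousLinearMap.mul_apply]
        rw [hq1, hv1, h1, hqX j, map_add]
        abel
      have hvnorm : ∀ j, ‖v j‖ ≤ (cS + 1) * (M * (cp * ‖x‖)) * γ' ^ j := by
        intro j
        have h1 : ‖S (ι (z j))‖ ≤ cS * ‖z j‖ := by
          calc ‖S (ι (z j))‖ ≤ ‖S‖ * ‖ι (z j)‖ := S.le_opNorm _
          _ = cS * ‖z j‖ := by rw [hιnorm]
        have h2 : ‖ι (z (j + 1))‖ = ‖z (j + 1)‖ := hιnorm _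
        have h3 := hznorm j
        have h4 := hznorm (j + 1)
        have h5 : M * γ' ^ (j + 1) * (cp * ‖x‖) ≤ M * γ' ^ j * (cp * ‖x‖) := by
          apply mul_le_mul_of_nonneg_right _ (by positivity)
          apply mul_le_mul_of_nonneg_left _ hM0.le
          calc γ' ^ (j + 1) = γ' ^ j * γ' := by rw [pow_succ]
          _ ≤ γ' ^ j * 1 := by
              apply mul_le_mul_of_nonneg_left hγ'le1 (by positivity)
          _ = γ' ^ j := by ring
        calc ‖v j‖ ≤ ‖S (ι (z j))‖ + ‖ι (z (j + 1))‖ := norm_sub_le _ _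
        _ ≤ cS * (M * γ' ^ j * (cp * ‖x‖)) + M * γ' ^ j * (cp * ‖x‖) := by
            rw [h2]
            apply add_le_add _ (h4.trans h5)
            apply h1.trans
            exact mul_le_mul_of_nonneg_left h3 hcS0
        _ = (cS + 1) * (M * (cp * ‖x‖)) * γ' ^ j := by ring
      have hclosed : ∀ j, q j = (S ^ j) (q 0)
          + ∑ i ∈ Finset.range j, (S ^ (j - 1 - i)) (v i) := by
        intro j
        induction j with
        | zero => simp
        | succ j ih =>
          rw [hrec j, ih, map_add, map_sum, Finset.sum_range_succ]
          have h1 : S ((S ^ j) (q 0)) = (S ^ (j + 1)) (q 0) := by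
            rw [pow_succ', ContinuousLinearMap.mul_apply]
          have h2 : ∀ i ∈ Finset.range j,
              S ((S ^ (j - 1 - i)) (v i)) = (S ^ (j + 1 - 1 - i)) (v i) := by
            intro i hi
            have hij : i < j := Finset.mem_range.1 hi
            have : j + 1 - 1 - i = (j - 1 - i) + 1 := by omega
            rw [this, pow_succ', ContinuousLinearMap.mul_apply]
          rw [Finset.sum_congr rfl h2, h1]
          have h3 : j + 1 - 1 - j = 0 := by omega
          rw [h3, pow_zero, ContinuousLinearMap.one_apply]
          abel
      have hq0eq : q 0 = x - ι (Pt x) := by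
        show (S ^ 0) x - ι ((Fp ^ 0) (Pt x)) = x - ι (Pt x)
        simp
      have hq0norm : ‖q 0‖ ≤ (1 + cp) * ‖x‖ := by
        rw [hq0eq]
        calc ‖x - ι (Pt x)‖ ≤ ‖x‖ + ‖ι (Pt x)‖ := norm_sub_le _ _
        _ ≤ ‖x‖ + cp * ‖x‖ := by
            rw [hιnorm]
            exact add_le_add le_rfl (Pt.le_opNorm x)
        _ = (1 + cp) * ‖x‖ := by ring
      have hqnorm : ∀ j, ‖q j‖ ≤ Mm * γ1 ^ j * ((1 + cp) * ‖x‖)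
          + (j : ℝ) * (Mm * ((cS + 1) * (M * (cp * ‖x‖)))) * γ1 ^ (j - 1) := by
        intro j
        rw [hclosed j]
        have hq0m : q 0 ∈ Xm := by
          rw [hq0eq]; exact hqmem x
        have h1 : ‖(S ^ j) (q 0)‖ ≤ Mm * γ1 ^ j * ((1 + cp) * ‖x‖) := by
          calc ‖(S ^ j) (q 0)‖ ≤ Mm * γ1 ^ j * ‖q 0‖ := hSpowXm j (q 0) hq0m
          _ ≤ Mm * γ1 ^ j * ((1 + cp) * ‖x‖) :=
              mul_le_mul_of_nonneg_left hq0norm (by positivity)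
        have h2 : ∀ i ∈ Finset.range j,
            ‖(S ^ (j - 1 - i)) (v i)‖ ≤ (Mm * ((cS + 1) * (M * (cp * ‖x‖)))) * γ1 ^ (j - 1) := by
          intro i hi
          have hij : i < j := Finset.mem_range.1 hi
          calc ‖(S ^ (j - 1 - i)) (v i)‖ ≤ Mm * γ1 ^ (j - 1 - i) * ‖v i‖ :=
              hSpowXm _ _ (hvXm i)
          _ ≤ Mm * γ1 ^ (j - 1 - i) * ((cS + 1) * (M * (cp * ‖x‖)) * γ' ^ i) :=
              mul_le_mul_of_nonneg_left (hvnorm i) (by positivity)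
          _ ≤ Mm * γ1 ^ (j - 1 - i) * ((cS + 1) * (M * (cp * ‖x‖)) * γ1 ^ i) := by
              apply mul_le_mul_of_nonneg_left _ (by positivity)
              apply mul_le_mul_of_nonneg_left _ (by positivity)
              exact pow_le_pow_left₀ hγ'0.le hγ'1.le i
          _ = (Mm * ((cS + 1) * (M * (cp * ‖x‖)))) * (γ1 ^ (j - 1 - i) * γ1 ^ i) := by ring
          _ ≤ (Mm * ((cS + 1) * (M * (cp * ‖x‖)))) * γ1 ^ (j - 1) := by
              apply mul_le_mul_of_nonneg_left _ (by positivity)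
              rw [← pow_add]
              have : j - 1 - i + i = j - 1 := by omega
              rw [this]
        calc ‖(S ^ j) (q 0) + ∑ i ∈ Finset.range j, (S ^ (j - 1 - i)) (v i)‖
            ≤ ‖(S ^ j) (q 0)‖ + ‖∑ i ∈ Finset.range j, (S ^ (j - 1 - i)) (v i)‖ :=
              norm_add_le _ _
        _ ≤ Mm * γ1 ^ j * ((1 + cp) * ‖x‖)
            + (j : ℝ) * (Mm * ((cS + 1) * (M * (cp * ‖x‖)))) * γ1 ^ (j - 1) := by
            apply add_le_add h1
            calc ‖∑ i ∈ Finset.range j, (S ^ (j - 1 - i)) (v i)‖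
                ≤ ∑ i ∈ Finset.range j, ‖(S ^ (j - 1 - i)) (v i)‖ := norm_sum_le _ _
            _ ≤ ∑ i ∈ Finset.range j, (Mm * ((cS + 1) * (M * (cp * ‖x‖)))) * γ1 ^ (j - 1) :=
                Finset.sum_le_sum h2
            _ = (j : ℝ) * (Mm * ((cS + 1) * (M * (cp * ‖x‖)))) * γ1 ^ (j - 1) := by
                rw [Finset.sum_const, Finset.card_range, nsmul_eq_mul]
                ring
      -- combine
      have hxk : (S ^ k) x = ι (z k) + q k := hqX k
      have hkpow : (k : ℝ) * γ1 ^ (k - 1) ≤ γ2 ^ k / (γ2 - γ1) := aux_k_pow hγ10 hγ12 k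
      have hγ'2 : γ' ^ k ≤ γ2 ^ k := pow_le_pow_left₀ hγ'0.le (by linarith) k
      have hγ12' : γ1 ^ k ≤ γ2 ^ k := pow_le_pow_left₀ hγ10.le hγ12.le k
      have hD0 : 0 ≤ Mm * ((cS + 1) * (M * (cp * ‖x‖))) := by positivity
      have hγ21 : 0 < γ2 - γ1 := by linarith
      have e1 : M * γ' ^ k * (cp * ‖x‖) ≤ M * γ2 ^ k * (cp * ‖x‖) :=
        mul_le_mul_of_nonneg_right (mul_le_mul_of_nonneg_left hγ'2 hM0.le) (by positivity)
      have e2 : Mm * γ1 ^ k * ((1 + cp) * ‖x‖) ≤ Mm * γ2 ^ k * ((1 + cp) * ‖x‖) :=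
        mul_le_mul_of_nonneg_right (mul_le_mul_of_nonneg_left hγ12' hMm0.le) (by positivity)
      have e3 : (k : ℝ) * (Mm * ((cS + 1) * (M * (cp * ‖x‖)))) * γ1 ^ (k - 1)
          ≤ γ2 ^ k / (γ2 - γ1) * (Mm * ((cS + 1) * (M * (cp * ‖x‖)))) := by
        have h := mul_le_mul_of_nonneg_right hkpow hD0
        calc (k : ℝ) * (Mm * ((cS + 1) * (M * (cp * ‖x‖)))) * γ1 ^ (k - 1)
            = (k : ℝ) * γ1 ^ (k - 1) * (Mm * ((cS + 1) * (M * (cp * ‖x‖)))) := by ring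
        _ ≤ γ2 ^ k / (γ2 - γ1) * (Mm * ((cS + 1) * (M * (cp * ‖x‖)))) := h
      have efin : M * γ2 ^ k * (cp * ‖x‖) + (Mm * γ2 ^ k * ((1 + cp) * ‖x‖)
          + γ2 ^ k / (γ2 - γ1) * (Mm * ((cS + 1) * (M * (cp * ‖x‖)))))
          = CC * γ2 ^ k * ‖x‖ := by
        rw [hCCdef]
        field_simp
        ring
      calc ‖(S ^ k) x‖ = ‖ι (z k) + q k‖ := by rw [← hxk]
      _ ≤ ‖ι (z k)‖ + ‖q k‖ := norm_add_le _ _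
      _ = ‖z k‖ + ‖q k‖ := by rw [hιnorm]
      _ ≤ M * γ' ^ k * (cp * ‖x‖) + (Mm * γ1 ^ k * ((1 + cp) * ‖x‖)
          + (k : ℝ) * (Mm * ((cS + 1) * (M * (cp * ‖x‖)))) * γ1 ^ (k - 1)) :=
          add_le_add (hznorm k) (hqnorm k)
      _ ≤ CC * γ2 ^ k * ‖x‖ := by
          rw [← efin]
          exact add_le_add e1 (add_le_add e2 e3)
    refine ⟨max 1 CC, le_max_left _ _, ?_⟩
    intro k
    apply ContinuousLinearMap.opNorm_le_bound
    · have h1 : 0 ≤ CC := by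
        rw [hCCdef]
        have : 0 < γ2 - γ1 := by linarith
        positivity
      have h2 : CC ≤ max 1 CC := le_max_right _ _
      positivity
    · intro x
      calc ‖(S ^ k) x‖ ≤ CC * γ2 ^ k * ‖x‖ := est k x
      _ ≤ max 1 CC * γ2 ^ k * ‖x‖ := by
          apply mul_le_mul_of_nonneg_right _ (norm_nonneg x)
          exact mul_le_mul_of_nonneg_right (le_max_right _ _) (by positivity)
end
end

section
/- Let X = ℓ²(ℕ) and U = ℂ. Define x1(k) := 0, x0(k) := e_k/k (e_k the k-th standard orthonormal basis vector of ℓ²(ℕ)), and u0(k) := k^{-3/2} for k ∈ ℕ. Then x1 and x0 are Bessel sequences in X and u0 ∈ ℓ²(ℕ); with synthesis operators Ξ0 ∈ L(ℓ²(ℕ), X) and Υ0 ∈ L(ℓ²(ℕ), ℂ), the following hold: (a) if ξ ∈ ℓ²(ℕ) and υ ∈ ℂ satisfy Ξ0*ξ + Υ0*υ = 0, then ξ = 0 and υ = 0 (consequently Σ_is = {(0,0)}); and (b) there is no K ∈ L(X, ℂ) such that for every w ∈ ℓ²(ℕ) there exists v ∈ ℓ²(ℕ) with Ξ0 v = Ξ0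 w and Υ0 v = K Ξ0 w. -/
noncomputable section
open ContinuousLinearMap

/-- `ℓ²(ℕ)`: the Hilbert space of square-summable complex sequences. -/
abbrev l2 : Type := lp (fun _ : ℕ => ℂ) 2

/-- `η` is a Bessel sequence in `Y`. -/
def Bessel {Y : Type} [NormedAddCommGroup Y] [InnerProductSpace ℂ Y] (η : ℕ → Y) : Prop :=
  ∃ α : ℝ, 0 < α ∧ ∀ y : Y, ∑' k : ℕ, ‖(inner ℂ y (η k) : ℂ)‖ ^ 2 ≤ α * ‖y‖ ^ 2

/-- `T` is the synthesis operator associated with `η`: `T w = ∑ₖ wₖ • ηₖ`. -/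
def IsSynthesis {Y : Type} [NormedAddCommGroup Y] [InnerProductSpace ℂ Y] (η : ℕ → Y)
    (T : l2 →L[ℂ] Y) : Prop :=
  ∀ w : l2, HasSum (fun k : ℕ => w k • η k) (T w)

/-- coordinate extraction via inner product with the standard basis -/
lemma aux_coord (z : l2) (k : ℕ) : (inner ℂ (lp.single 2 k (1 : ℂ)) z : ℂ) = z k := by
  rw [lp.inner_single_left]; simp [RCLike.inner_apply]

lemma aux_not_summable_shift : ¬ Summable (fun k : ℕ => ((k : ℝ) + 1)⁻¹) := by
  intro h
  exact Real.not_summable_natCast_inv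
    ((summable_nat_add_iff 1).1 (by simpa using h))

lemma aux_l2_summable (z : l2) : Summable (fun k : ℕ => ‖z k‖ ^ (2:ℝ)) :=
  (lp.memℓp z).summable (by norm_num)

lemma aux_l2_summable' (z : l2) : Summable (fun k : ℕ => ‖z k‖ ^ 2) := by
  have := aux_l2_summable z
  simp_rw [show (2:ℝ) = ((2:ℕ):ℝ) by norm_num, Real.rpow_natCast] at this
  exact this

/-- no `l2` element can have coordinates `c * (k+1)^(-1/2)` with `c ≠ 0` -/
lemma aux_key (z : l2) (c : ℂ)
    (hz : ∀ k : ℕ, z k = c * (((k+1:ℝ) ^ (-(1:ℝ)/2) : ℝ) : ℂ)) : c = 0 := by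
  by_contra hc
  apply aux_not_summable_shift
  have hs := aux_l2_summable z
  have heq : ∀ k : ℕ, ‖z k‖ ^ (2:ℝ) = ‖c‖ ^ (2:ℝ) * ((k:ℝ)+1)⁻¹ := by
    intro k
    have hk : (0:ℝ) < (k:ℝ)+1 := by positivity
    rw [hz k, norm_mul, Complex.norm_real, Real.norm_eq_abs,
      abs_of_nonneg (Real.rpow_nonneg hk.le _),
      Real.mul_rpow (norm_nonneg _) (Real.rpow_nonneg hk.le _),
      ← Real.rpow_mul hk.le]
    have h2 : (-(1:ℝ)/2*2) = -1 := by norm_num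
    rw [h2, Real.rpow_neg_one]
  simp_rw [heq] at hs
  have hc2 : ‖c‖ ^ (2:ℝ) ≠ 0 :=
    ne_of_gt (Real.rpow_pos_of_pos (norm_pos_iff.mpr hc) _)
  exact (summable_mul_left_iff hc2).1 hs

/-- `(k+1) * (k+1)^(-3/2) = (k+1)^(-1/2)` in `ℂ` -/
lemma aux_rpow_cancel (k : ℕ) :
    ((k : ℂ) + 1) * (((k+1:ℝ) ^ (-(3:ℝ)/2) : ℝ) : ℂ) = (((k+1:ℝ) ^ (-(1:ℝ)/2) : ℝ) : ℂ) := by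
  have hk : (0:ℝ) < (k:ℝ)+1 := by positivity
  have : ((k:ℝ) + 1) * ((k+1:ℝ) ^ (-(3:ℝ)/2)) = (k+1:ℝ) ^ (-(1:ℝ)/2) := by
    nth_rw 1 [show ((k:ℝ)+1) = ((k:ℝ)+1) ^ (1:ℝ) by rw [Real.rpow_one]]
    rw [← Real.rpow_add hk]
    norm_num
  calc ((k : ℂ) + 1) * (((k+1:ℝ) ^ (-(3:ℝ)/2) : ℝ) : ℂ)
      = ((((k:ℝ) + 1) * ((k+1:ℝ) ^ (-(3:ℝ)/2)) : ℝ) : ℂ) := by push_cast; ring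
    _ = _ := by rw [this]

set_option maxHeartbeats 1000000 in
theorem stmt_17
    -- the data: indices are shifted so that `k : ℕ` denotes the (k+1)-st term
    (x1 : ℕ → l2) (hx1 : ∀ k : ℕ, x1 k = 0)
    (x0 : ℕ → l2) (hx0 : ∀ k : ℕ, x0 k = ((k + 1 : ℂ))⁻¹ • lp.single 2 k (1 : ℂ))
    (u0 : ℕ → ℂ) (hu0 : ∀ k : ℕ, u0 k = (((k + 1 : ℝ) ^ (-(3 : ℝ) / 2) : ℝ) : ℂ))
    (Ξ1 Ξ0 : l2 →L[ℂ] l2) (Υ0 : l2 →L[ℂ] ℂ)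
    (hΞ1 : IsSynthesis x1 Ξ1) (hΞ0 : IsSynthesis x0 Ξ0)
    (hΥ0 : ∀ w : l2, HasSum (fun k : ℕ => w k * u0 k) (Υ0 w)) :
    -- x1 and x0 are Bessel sequences and u0 ∈ ℓ²
    Bessel x1 ∧ Bessel x0 ∧ Memℓp u0 2 ∧
    -- (a) Ξ0* ξ + Υ0* υ = 0 implies ξ = 0 and υ = 0
    (∀ (ξ : l2) (υ : ℂ), adjoint Ξ0 ξ + adjoint Υ0 υ = 0 → ξ = 0 ∧ υ = 0) ∧
    -- consequently Σ_is = {(0, 0)}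
    ({p : (l2 →L[ℂ] l2) × (ℂ →L[ℂ] l2) | ∀ k : ℕ, x1 k = p.1 (x0 k) + p.2 (u0 k)}
      = {(0, 0)}) ∧
    -- (b) no bounded K satisfies the range inclusion
    ¬ ∃ K : l2 →L[ℂ] ℂ, ∀ w : l2, ∃ v : l2, Ξ0 v = Ξ0 w ∧ Υ0 v = K (Ξ0 w) := by
  -- coordinates of basis vectors
  have hek : ∀ (k j : ℕ), (lp.single 2 k (1:ℂ) : l2) j = if j = k then 1 else 0 := by
    intro k j
    by_cases h : j = k
    · simp [h, lp.single_apply_self]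
    · simp [h, lp.single_apply_ne 2 k _ h]
  -- evaluation of Ξ0 on basis vectors
  have hΞ0e : ∀ k : ℕ, Ξ0 (lp.single 2 k (1:ℂ)) = x0 k := by
    intro k
    refine (hΞ0 _).unique ?_
    have h : (fun j : ℕ => (lp.single 2 k (1:ℂ) : l2) j • x0 j)
        = fun j => if j = k then x0 k else 0 := by
      funext j
      by_cases h : j = k <;> simp [hek, h]
    rw [h]
    exact hasSum_ite_eq k (x0 k)
  -- evaluation of Υ0 on basis vectors
  have hΥ0e : ∀ k : ℕ, Υ0 (lp.single 2 k (1:ℂ)) = u0 k := by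
    intro k
    refine (hΥ0 _).unique ?_
    have h : (fun j : ℕ => (lp.single 2 k (1:ℂ) : l2) j * u0 j)
        = fun j => if j = k then u0 k else 0 := by
      funext j
      by_cases h : j = k <;> simp [hek, h]
    rw [h]
    exact hasSum_ite_eq k (u0 k)
  -- coordinates of Ξ0 v
  have hcomp : ∀ (v : l2) (k : ℕ),
      (inner ℂ (lp.single 2 k (1:ℂ)) (Ξ0 v) : ℂ) = ((k:ℂ)+1)⁻¹ * v k := by
    intro v k
    have h1 := (hΞ0 v).mapL (innerSL ℂ (lp.single 2 k (1:ℂ)))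
    have h2 : (fun j : ℕ => (innerSL ℂ (lp.single 2 k (1:ℂ))) (v j • x0 j))
        = fun j => if j = k then ((k:ℂ)+1)⁻¹ * v k else 0 := by
      funext j
      by_cases h : j = k
      · subst h
        simp [hx0, inner_smul_right, aux_coord, hek]
        ring
      · simp [hx0, inner_smul_right, aux_coord, hek, h]
    rw [h2] at h1
    exact h1.unique (hasSum_ite_eq k _)
  -- injectivity of Ξ0
  have hΞ0inj : ∀ v w : l2, Ξ0 v = Ξ0 w → v = w := by
    intro v w h
    apply lp.ext
    funext k
    have h1 := hcomp v k
    have h2 := hcomp w k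
    rw [h] at h1
    have hk : ((k:ℂ)+1)⁻¹ ≠ 0 :=
      inv_ne_zero (Nat.cast_add_one_ne_zero k)
    have := h1.symm.trans h2
    exact mul_left_cancel₀ hk this
  -- zero test
  have hzero : ∀ z : l2, (∀ k : ℕ, z k = 0) → z = 0 := by
    intro z hz
    apply lp.ext
    funext k
    simpa using hz k
  refine ⟨?_, ?_, ?_, ?_, ?_, ?_⟩
  · -- Bessel x1
    refine ⟨1, one_pos, fun y => ?_⟩
    simp only [hx1, inner_zero_right, norm_zero]
    simp

  · -- Bessel x0
    refine ⟨1, one_pos, fun y => ?_⟩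
    have hb : ∀ k : ℕ, ‖(inner ℂ y (x0 k) : ℂ)‖ ^ 2 ≤ ‖y k‖ ^ 2 := by
      intro k
      rw [hx0, inner_smul_right, norm_mul, lp.inner_single_right]
      have h1 : ‖(inner ℂ (y k) (1:ℂ) : ℂ)‖ = ‖y k‖ := by
        simp [RCLike.inner_apply]
      rw [h1, mul_pow]
      have h2 : ‖((k:ℂ)+1)⁻¹‖ ^ 2 ≤ 1 := by
        rw [norm_inv]
        have : (1:ℝ) ≤ ‖(k:ℂ)+1‖ := by
          rw [show ((k:ℂ)+1) = ((k+1:ℕ):ℂ) by push_cast; ring, Complex.norm_natCast]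
          exact_mod_cast Nat.succ_le_of_lt k.succ_pos
        have h3 : ‖(k:ℂ)+1‖⁻¹ ≤ 1 := by
          rw [inv_le_one_iff₀]; right; exact this
        calc (‖(k:ℂ)+1‖⁻¹) ^ 2 ≤ 1 ^ 2 := by
              apply pow_le_pow_left₀ (by positivity) h3
          _ = 1 := one_pow 2
      calc ‖((k:ℂ)+1)⁻¹‖ ^ 2 * ‖y k‖ ^ 2 ≤ 1 * ‖y k‖ ^ 2 := by
            apply mul_le_mul_of_nonneg_right h2 (by positivity)
        _ = ‖y k‖ ^ 2 := one_mul _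
    have hs2 := aux_l2_summable' y
    have hnorm : ‖y‖ ^ 2 = ∑' k : ℕ, ‖y k‖ ^ 2 := by
      have := lp.norm_rpow_eq_tsum (p := 2) (by norm_num) y
      simp_rw [show ((2:ENNReal).toReal) = ((2:ℕ):ℝ) by norm_num, Real.rpow_natCast] at this
      exact this
    rw [one_mul, hnorm]
    exact Summable.tsum_le_tsum hb
      (Summable.of_nonneg_of_le (fun k => by positivity) hb hs2) hs2
  · -- u0 ∈ ℓ²
    apply memℓp_gen
    have h : (fun k : ℕ => ‖u0 k‖ ^ (2:ENNReal).toReal) = fun k : ℕ => ((k:ℝ)+1) ^ (-(3:ℝ)) := by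
      funext k
      have hk : (0:ℝ) < (k:ℝ)+1 := by positivity
      rw [hu0, Complex.norm_real, Real.norm_eq_abs, abs_of_nonneg (Real.rpow_nonneg hk.le _),
        show ((2:ENNReal).toReal) = (2:ℝ) by norm_num, ← Real.rpow_mul hk.le]
      norm_num
    rw [h]
    have := (summable_nat_add_iff (f := fun n : ℕ => ((n:ℝ)) ^ (-(3:ℝ))) 1).2
      (Real.summable_nat_rpow.2 (by norm_num))
    exact this.congr (fun n => by norm_num)
  · -- (a)
    intro ξ υ h
    have hcoords : ∀ k : ℕ,
        ((k:ℂ)+1)⁻¹ * ξ k + (((k+1:ℝ) ^ (-(3:ℝ)/2) : ℝ) : ℂ) * υ = 0 := by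
      intro k
      have h0 : (inner ℂ (lp.single 2 k (1:ℂ)) (adjoint Ξ0 ξ + adjoint Υ0 υ) : ℂ) = 0 := by
        rw [h, inner_zero_right]
      rw [inner_add_right, adjoint_inner_right, adjoint_inner_right, hΞ0e, hΥ0e, hx0,
        inner_smul_left, aux_coord, hu0] at h0
      rw [RCLike.inner_apply] at h0
      simp only [map_inv₀, Complex.conj_natCast, map_add, map_one, Complex.conj_ofReal] at h0
      convert h0 using 2
      ring
    have hυ : υ = 0 := by
      have hξ : ∀ k : ℕ, ξ k = (-υ) * (((k+1:ℝ) ^ (-(1:ℝ)/2) : ℝ) : ℂ) := by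
        intro k
        have hk : ((k:ℂ)+1) ≠ 0 := Nat.cast_add_one_ne_zero k
        have := hcoords k
        have h1 : ξ k + ((k:ℂ)+1) * ((((k+1:ℝ) ^ (-(3:ℝ)/2) : ℝ) : ℂ) * υ) = 0 := by
          have h2 := congrArg (fun z : ℂ => ((k:ℂ)+1) * z) (hcoords k)
          simpa [mul_add, ← mul_assoc, mul_inv_cancel₀ hk] using h2
        have h3 := eq_neg_of_add_eq_zero_left h1
        rw [h3, ← mul_assoc, aux_rpow_cancel]
        ring
      have := aux_key ξ (-υ) hξ
      simpa using this
    refine ⟨?_, hυ⟩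
    apply hzero
    intro k
    have := hcoords k
    rw [hυ, mul_zero, add_zero] at this
    have hk : ((k:ℂ)+1)⁻¹ ≠ 0 :=
      inv_ne_zero (Nat.cast_add_one_ne_zero k)
    exact (mul_eq_zero.1 this).resolve_left hk
  · -- Σ_is = {(0,0)}
    ext p
    simp only [Set.mem_setOf_eq, Set.mem_singleton_iff]
    constructor
    · intro hp
      set b : l2 := p.2 1 with hbdef
      have hp2 : ∀ c : ℂ, p.2 c = c • b := by
        intro c
        rw [hbdef, ← map_smul, smul_eq_mul, mul_one]
      -- p.1 e_k = -(k+1)^{-1/2} • b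
      have hp1e : ∀ k : ℕ, p.1 (lp.single 2 k (1:ℂ))
          = (-(((k+1:ℝ) ^ (-(1:ℝ)/2) : ℝ) : ℂ)) • b := by
        intro k
        have hk : ((k:ℂ)+1) ≠ 0 := Nat.cast_add_one_ne_zero k
        have h0 := hp k
        rw [hx1, hx0, hu0, map_smul, hp2] at h0
        have h1 : ((k:ℂ)+1) • ((0:l2)) = ((k:ℂ)+1) • (((k:ℂ)+1)⁻¹ • p.1 (lp.single 2 k (1:ℂ))
            + (((k+1:ℝ) ^ (-(3:ℝ)/2) : ℝ) : ℂ) • b) := by rw [← h0]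
        rw [smul_zero, smul_add, smul_smul, mul_inv_cancel₀ hk, one_smul, smul_smul,
          aux_rpow_cancel] at h1
        have := eq_neg_of_add_eq_zero_left h1.symm
        rw [this, neg_smul]
      -- b = 0
      have hb0 : b = 0 := by
        have hz : ∀ k : ℕ, (adjoint p.1 b) k
            = (-(inner ℂ b b : ℂ)) * (((k+1:ℝ) ^ (-(1:ℝ)/2) : ℝ) : ℂ) := by
          intro k
          rw [← aux_coord, adjoint_inner_right, hp1e, inner_smul_left]
          simp only [map_neg, Complex.conj_ofReal]
          ring
        have := aux_key (adjoint p.1 b) _ hz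
        have hbb : (inner ℂ b b : ℂ) = 0 := by simpa using this
        exact inner_self_eq_zero.1 hbb
      -- p.1 = 0
      have hp1 : p.1 = 0 := by
        have hadj : adjoint p.1 = 0 := by
          refine ContinuousLinearMap.ext fun y => ?_
          rw [ContinuousLinearMap.zero_apply]
          apply hzero
          intro k
          rw [← aux_coord, adjoint_inner_right, hp1e, hb0, smul_zero, inner_zero_left]
        have := congrArg adjoint hadj
        rwa [adjoint_adjoint, map_zero] at this
      have hp2' : p.2 = 0 := by
        ext c
        rw [hp2, hb0, smul_zero]
        rfl
      exact Prod.ext hp1 hp2'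
    · rintro rfl
      intro k
      simp [hx1]
  · -- (b)
    rintro ⟨K, hK⟩
    have hKe : ∀ k : ℕ, K (lp.single 2 k (1:ℂ)) = (((k+1:ℝ) ^ (-(1:ℝ)/2) : ℝ) : ℂ) := by
      intro k
      obtain ⟨v, hv1, hv2⟩ := hK (lp.single 2 k (1:ℂ))
      have hveq : v = lp.single 2 k (1:ℂ) := hΞ0inj _ _ hv1
      rw [hveq, hΥ0e, hu0] at hv2
      rw [hΞ0e, hx0, map_smul, smul_eq_mul] at hv2
      have hk : ((k:ℂ)+1) ≠ 0 := Nat.cast_add_one_ne_zero k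
      have h1 : ((k:ℂ)+1) * (((k+1:ℝ) ^ (-(3:ℝ)/2) : ℝ) : ℂ)
          = ((k:ℂ)+1) * (((k:ℂ)+1)⁻¹ * K (lp.single 2 k (1:ℂ))) := by rw [← hv2]
      rw [aux_rpow_cancel, ← mul_assoc, mul_inv_cancel₀ hk, one_mul] at h1
      exact h1.symm
    have hz : ∀ k : ℕ, (adjoint K 1) k = (1:ℂ) * (((k+1:ℝ) ^ (-(1:ℝ)/2) : ℝ) : ℂ) := by
      intro k
      rw [← aux_coord, adjoint_inner_right, hKe, RCLike.inner_apply]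
      simp [Complex.conj_ofReal]
    have := aux_key (adjoint K 1) 1 hz
    simp at this
end
end

section
/- Let H and Y be complex Hilbert spaces and T ∈ L(H, Y). Then there exists a constant c ≥ 0 such that T*T ≤ c² (T*T)² as operators on H if and only if the range of T is closed in Y. -/
set_option maxHeartbeats 1000000

noncomputable section
open ContinuousLinearMap

variable {H : Type} [NormedAddCommGroup H] [InnerProductSpace ℂ H] [CompleteSpace H]
  {Y : Type} [NormedAddCommGroup Y] [InnerProductSpace ℂ Y] [CompleteSpace Y]

local notation "⟪" x ", " y "⟫" => @inner ℂ _ _ x y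

lemma aux_sa (T : H →L[ℂ] Y) : IsSelfAdjoint (adjoint T ∘L T) :=
  isSelfAdjoint_iff'.mpr (by rw [adjoint_comp, adjoint_adjoint])

lemma aux_re (T : H →L[ℂ] Y) (c : ℝ) (x : H) :
    RCLike.re ⟪((c ^ 2 : ℂ) • ((adjoint T ∘L T) ^ 2) - adjoint T ∘L T) x, x⟫
      = c ^ 2 * ‖(adjoint T ∘L T) x‖ ^ 2 - ‖T x‖ ^ 2 := by
  set S := adjoint T ∘L T with hS
  have h2 : (S ^ 2) x = S (S x) := by rw [pow_two]; rfl
  have hsym : ⟪S (S x), x⟫ = ⟪S x, S x⟫ := by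
    exact (aux_sa T).isSymmetric (S x) x
  have h1 : ⟪S x, x⟫ = ⟪T x, T x⟫ := by
    rw [hS, ContinuousLinearMap.comp_apply, adjoint_inner_left]
  rw [sub_apply, inner_sub_left, map_sub, smul_apply, inner_smul_left, h2, hsym, h1]
  have : (starRingEnd ℂ) ((c:ℂ) ^ 2) = ((c ^ 2 : ℝ) : ℂ) := by
    simp [← Complex.ofReal_pow]
  rw [show ((c:ℂ)^2) = ((c^2:ℝ):ℂ) by push_cast; ring] at *
  simp only [Complex.conj_ofReal]
  simp only [RCLike.re_to_complex, Complex.re_ofReal_mul]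
  simp [← RCLike.re_to_complex, inner_self_eq_norm_sq]
  rw [← Complex.ofReal_pow, ← Complex.ofReal_pow, RCLike.re_to_complex, RCLike.re_to_complex,
    Complex.ofReal_re, Complex.ofReal_re]


lemma aux_pos (T : H →L[ℂ] Y) (c : ℝ)
    (hb : ∀ x, ‖T x‖ ≤ c * ‖(adjoint T ∘L T) x‖) :
    ((c ^ 2 : ℂ) • ((adjoint T ∘L T) ^ 2) - adjoint T ∘L T).IsPositive := by
  constructor
  · have h1 : IsSelfAdjoint (adjoint T ∘L T) := aux_sa T
    have h2 : IsSelfAdjoint ((adjoint T ∘L T) ^ 2) := h1.pow 2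
    have h3 : IsSelfAdjoint ((c ^ 2 : ℂ) • (adjoint T ∘L T) ^ 2) := by
      rw [isSelfAdjoint_iff'] at h2 ⊢
      rw [map_smulₛₗ, h2]
      congr 1
      simp [← Complex.ofReal_pow, Complex.conj_ofReal]
    exact (h3.sub h1).isSymmetric
  · intro x
    rw [ContinuousLinearMap.reApplyInnerSelf, aux_re T c x]
    have := hb x
    nlinarith [norm_nonneg (T x), norm_nonneg ((adjoint T ∘L T) x)]

theorem stmt_18
    {H : Type} [NormedAddCommGroup H] [InnerProductSpace ℂ H] [CompleteSpace H]
    {Y : Type} [NormedAddCommGroup Y] [InnerProductSpace ℂ Y] [CompleteSpace Y]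
    (T : H →L[ℂ] Y) :
    (∃ c : ℝ, 0 ≤ c ∧
        ((c ^ 2 : ℂ) • ((adjoint T ∘L T) ^ 2) - adjoint T ∘L T).IsPositive)
      ↔ IsClosed (Set.range ⇑T) := by
  set S : H →L[ℂ] H := adjoint T ∘L T with hSdef
  haveI : CompleteSpace (LinearMap.ker (T : H →ₗ[ℂ] Y)) := by exact (isClosed_ker T).completeSpace_coe
  set Kp : Submodule ℂ H := (LinearMap.ker (T : H →ₗ[ℂ] Y))ᗮ with hKp
  have hKpp : Kpᗮ = LinearMap.ker (T : H →ₗ[ℂ] Y) := by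
    rw [hKp, Submodule.orthogonal_orthogonal_eq_closure,
      (isClosed_ker T).submodule_topologicalClosure_eq]
  have hTfac : ∀ x : H, T ((Kp.orthogonalProjection x : H)) = T x := by
    intro x
    have hx : x - (Kp.orthogonalProjection x : H) ∈ Kpᗮ :=
      Submodule.sub_starProjection_mem_orthogonal x
    rw [hKpp, LinearMap.mem_ker, map_sub, sub_eq_zero] at hx
    exact hx.symm
  have hSfac : ∀ x : H, S ((Kp.orthogonalProjection x : H)) = S x := by
    intro x
    rw [hSdef, ContinuousLinearMap.comp_apply, ContinuousLinearMap.comp_apply, hTfac]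
  have hST : ∀ x : H, RCLike.re (inner ℂ (S x) x) = ‖T x‖ ^ 2 :=
    fun x => (T.apply_norm_sq_eq_inner_adjoint_left x).symm
  constructor
  · rintro ⟨c, hc, hsa, hpos⟩
    have h1 : ∀ x, ‖T x‖ ≤ c * ‖S x‖ := by
      intro x
      have h := hpos x
      rw [ContinuousLinearMap.reApplyInnerSelf, aux_re T c x] at h
      nlinarith [norm_nonneg (T x), norm_nonneg (S x), mul_nonneg hc (norm_nonneg (S x))]
    have h2 : ∀ x, ‖S x‖ ≤ c ^ 2 * ‖S (S x)‖ := by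
      intro x
      have e1 : inner ℂ (S x) (S x) = inner ℂ (T x) (T (S x)) :=
        adjoint_inner_left T (S x) (T x)
      have e2 : ‖S x‖ ^ 2 = RCLike.re (inner ℂ (T x) (T (S x))) := by
        rw [← e1, inner_self_eq_norm_sq]
      have e3 : RCLike.re (inner ℂ (T x) (T (S x))) ≤ ‖T x‖ * ‖T (S x)‖ :=
        re_inner_le_norm _ _
      have e4 : ‖T x‖ * ‖T (S x)‖ ≤ (c * ‖S x‖) * (c * ‖S (S x)‖) :=
        mul_le_mul (h1 x) (h1 (S x)) (norm_nonneg _)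
          (mul_nonneg hc (norm_nonneg _))
      rcases eq_or_lt_of_le (norm_nonneg (S x)) with h0 | h0
      · rw [← h0]
        positivity
      · nlinarith
    have h3 : ∀ u ∈ closure (Set.range ⇑S), ‖u‖ ≤ c ^ 2 * ‖S u‖ := by
      have hcl : IsClosed {u : H | ‖u‖ ≤ c ^ 2 * ‖S u‖} :=
        isClosed_le continuous_norm (continuous_const.mul S.continuous.norm)
      intro u hu
      refine hcl.closure_subset_iff.mpr ?_ hu
      rintro _ ⟨x, rfl⟩
      exact h2 x
    have hker : ∀ u : Kp, (u : H) ∈ closure (Set.range ⇑S) := by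
      have hsub : (LinearMap.range (S : H →ₗ[ℂ] H))ᗮ ≤ LinearMap.ker (T : H →ₗ[ℂ] Y) := by
        intro v hv
        have hv0 : inner ℂ (S v) v = 0 :=
          hv (S v) (LinearMap.mem_range_self _ v)
        have : ‖T v‖ ^ 2 = 0 := by rw [← hST v, hv0]; simp
        rw [LinearMap.mem_ker, ← norm_eq_zero]
        exact (pow_eq_zero_iff two_ne_zero).mp this
      have hle : Kp ≤ (LinearMap.range (S : H →ₗ[ℂ] H))ᗮᗮ := Submodule.orthogonal_le hsub
      intro u
      have := hle u.2
      rw [Submodule.orthogonal_orthogonal_eq_closure, ← SetLike.mem_coe,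
        Submodule.topologicalClosure_coe, LinearMap.coe_range] at this
      simpa using this
    -- antilipschitz map
    set f : Kp →L[ℂ] Y := T ∘L Kp.subtypeL with hf
    have hb : ∀ u : Kp, ‖u‖ ≤ (c ^ 2 * ‖adjoint T‖) * ‖f u‖ := by
      intro u
      have hu1 : ‖(u : H)‖ ≤ c ^ 2 * ‖S (u : H)‖ := h3 _ (hker u)
      have hu2 : ‖S (u : H)‖ ≤ ‖adjoint T‖ * ‖T (u : H)‖ := by
        rw [hSdef, ContinuousLinearMap.comp_apply]
        exact (adjoint T).le_opNorm _
      have : ‖f u‖ = ‖T (u : H)‖ := rfl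
      rw [this]
      calc ‖u‖ = ‖(u : H)‖ := rfl
        _ ≤ c ^ 2 * ‖S (u : H)‖ := hu1
        _ ≤ c ^ 2 * (‖adjoint T‖ * ‖T (u : H)‖) := by
            refine mul_le_mul_of_nonneg_left hu2 (by positivity)
        _ = (c ^ 2 * ‖adjoint T‖) * ‖T (u : H)‖ := by ring
    have hanti : AntilipschitzWith (Real.toNNReal (c ^ 2 * ‖adjoint T‖)) f := by
      refine f.antilipschitz_of_bound fun u => ?_
      rw [Real.coe_toNNReal _ (by positivity)]
      exact hb u
    have hcl := hanti.isClosed_range f.uniformContinuous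
    have hrange : Set.range ⇑f = Set.range ⇑T := by
      ext y
      constructor
      · rintro ⟨u, rfl⟩
        exact ⟨(u : H), rfl⟩
      · rintro ⟨x, rfl⟩
        exact ⟨Kp.orthogonalProjection x, hTfac x⟩
    rwa [hrange] at hcl
  · intro hclosed
    haveI : CompleteSpace (LinearMap.range (T : H →ₗ[ℂ] Y)) := by
      have : IsClosed ((LinearMap.range (T : H →ₗ[ℂ] Y) : Submodule ℂ Y) : Set Y) := by
        rwa [LinearMap.coe_range]
      exact this.completeSpace_coe
    set g : Kp →L[ℂ] LinearMap.range (T : H →ₗ[ℂ] Y) :=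
      (T ∘L Kp.subtypeL).codRestrict (LinearMap.range (T : H →ₗ[ℂ] Y))
        (fun u => LinearMap.mem_range_self _ (u : H)) with hg
    have hginj : g.ker = ⊥ := by
      rw [LinearMap.ker_eq_bot']
      intro u hu
      have hTu : T (u : H) = 0 := by
        have := congrArg (Subtype.val) hu
        exact this
      have hmem : (u : H) ∈ LinearMap.ker (T : H →ₗ[ℂ] Y) := hTu
      have : inner ℂ (u : H) (u : H) = 0 := u.2 (u : H) hmem
      have : (u : H) = 0 := by
        rwa [inner_self_eq_zero] at this
      exact Subtype.ext this
    have hgsurj : g.range = ⊤ := by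
      rw [LinearMap.range_eq_top]
      rintro ⟨y, x, rfl⟩
      refine ⟨Kp.orthogonalProjection x, ?_⟩
      apply Subtype.ext
      exact hTfac x
    let e := ContinuousLinearEquiv.ofBijective g hginj hgsurj
    set C : ℝ := ‖(e.symm : LinearMap.range (T : H →ₗ[ℂ] Y) →L[ℂ] Kp)‖ with hC
    have hbelow : ∀ u : Kp, ‖(u : H)‖ ≤ C * ‖T (u : H)‖ := by
      intro u
      have h1 : ‖u‖ ≤ C * ‖e u‖ := by
        calc ‖u‖ = ‖e.symm (e u)‖ := by rw [e.symm_apply_apply]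
          _ ≤ C * ‖e u‖ := by
              simpa using (e.symm : LinearMap.range (T : H →ₗ[ℂ] Y) →L[ℂ] Kp).le_opNorm (e u)
      have h2 : ‖e u‖ = ‖T (u : H)‖ := rfl
      rw [h2] at h1
      exact h1
    have hbound : ∀ x, ‖T x‖ ≤ C * ‖S x‖ := by
      intro x
      set u : H := (Kp.orthogonalProjection x : H) with hu
      have h1 : ‖T u‖ ^ 2 = RCLike.re (inner ℂ (S u) u) := (hST u).symm
      have h2 : RCLike.re (inner ℂ (S u) u) ≤ ‖S u‖ * ‖u‖ := re_inner_le_norm _ _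
      have h3 : ‖u‖ ≤ C * ‖T u‖ := hbelow _
      have hc0 : 0 ≤ C := norm_nonneg _
      have key : ‖T u‖ ≤ C * ‖S u‖ := by
        rcases eq_or_lt_of_le (norm_nonneg (T u)) with h0 | h0
        · rw [← h0]; positivity
        · nlinarith [norm_nonneg (S u)]
      rw [← hTfac x, ← hSfac x]
      exact key
    exact ⟨C, norm_nonneg _, aux_pos T C hbound⟩
end
end
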